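/- For any infinite-dimensional Banach space X and any t ∈ (0, 1/2], the (β)-modulus of X at t is at most the modulus of asymptotic uniform convexity of X at 2t: β̄_X(t) ≤ δ̄_X(2t). -/

import Mathlib

/-- The (β)-modulus of a Banach space `X` at `t`. -/
noncomputable def betaMod (X : Type*) [NormedAddCommGroup X] (t : ℝ) : ℝ :=
  1 - sSup {r : ℝ | ∃ (x : X) (xs : ℕ → X), ‖x‖ ≤ 1 ∧ (∀ n, ‖xs n‖ ≤ 1) ∧
    (∀ n m, n ≠ m → t ≤ ‖xs n - xs m‖) ∧ r = ⨅ n, ‖x + xs n‖ / 2}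

/-- The modulus of asymptotic uniform convexity of `X` at `t`. -/
noncomputable def aucMod (X : Type*) [NormedAddCommGroup X] [NormedSpace ℝ X] (t : ℝ) : ℝ :=
  ⨅ x : {x : X // ‖x‖ = 1},
    ⨆ Y : {Y : Submodule ℝ X // IsClosed (Y : Set X) ∧ FiniteDimensional ℝ (X ⧸ Y)},
      ⨅ z : {z : X // z ∈ Y.val ∧ t ≤ ‖z‖}, (‖x.val + z.val‖ - 1)

section Aux

variable {X : Type*} [NormedAddCommGroup X] [NormedSpace ℝ X]

/-- quotient by kernel of a map into a finite-dimensional space is finite-dimensional -/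
lemma fdQuotKer {V : Type*} [AddCommGroup V] [Module ℝ V] [FiniteDimensional ℝ V]
    (m : X →ₗ[ℝ] V) : FiniteDimensional ℝ (X ⧸ LinearMap.ker m) :=
  LinearEquiv.finiteDimensional m.quotKerEquivRange.symm

/-- a closed, finite-codimensional submodule -/
def IsGood (Y : Submodule ℝ X) : Prop :=
  IsClosed (Y : Set X) ∧ FiniteDimensional ℝ (X ⧸ Y)

lemma isGood_top : IsGood (⊤ : Submodule ℝ X) := by
  constructor
  · exact isClosed_univ
  · have h : LinearMap.ker (0 : X →ₗ[ℝ] ℝ) = ⊤ := LinearMap.ker_zero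
    rw [← h]
    exact fdQuotKer 0

lemma isGood_ker (f : X →L[ℝ] ℝ) : IsGood (LinearMap.ker (f : X →ₗ[ℝ] ℝ)) := by
  constructor
  · exact ContinuousLinearMap.isClosed_ker f
  · exact fdQuotKer (f : X →ₗ[ℝ] ℝ)

lemma isGood_inf {Y₁ Y₂ : Submodule ℝ X} (h₁ : IsGood Y₁) (h₂ : IsGood Y₂) :
    IsGood (Y₁ ⊓ Y₂) := by
  haveI := h₁.2; haveI := h₂.2
  constructor
  · exact h₁.1.inter h₂.1
  · have hk : LinearMap.ker ((Y₁.mkQ).prod (Y₂.mkQ)) = Y₁ ⊓ Y₂ := by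
      rw [LinearMap.ker_prod, Submodule.ker_mkQ, Submodule.ker_mkQ]
    rw [← hk]
    exact fdQuotKer _

lemma isGood_finsetInf {ι : Type*} (s : Finset ι) (p : ι → Submodule ℝ X)
    (h : ∀ i ∈ s, IsGood (p i)) : IsGood (s.inf p) := by
  classical
  induction s using Finset.induction_on with
  | empty => simpa using isGood_top
  | insert _ _ hx ih =>
    rw [Finset.inf_insert]
    exact isGood_inf (h _ (Finset.mem_insert_self _ _))
      (ih fun i hi => h i (Finset.mem_insert_of_mem hi))

lemma exists_norm_eq_of_isGood (hinf : ¬ FiniteDimensional ℝ X)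
    {Y : Submodule ℝ X} (hY : IsGood Y) (c : ℝ) (hc : 0 < c) :
    ∃ z ∈ Y, ‖z‖ = c := by
  have hbot : Y ≠ ⊥ := by
    intro h
    apply hinf
    haveI := hY.2
    have e : (X ⧸ Y) ≃ₗ[ℝ] X := Submodule.quotEquivOfEqBot Y h
    exact LinearEquiv.finiteDimensional e
  obtain ⟨y, hyY, hy0⟩ := Y.ne_bot_iff.mp hbot
  refine ⟨(c / ‖y‖) • y, Y.smul_mem _ hyY, ?_⟩
  rw [norm_smul, Real.norm_eq_abs, abs_div, abs_of_pos hc, abs_of_pos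
    (norm_pos_iff.mpr hy0), div_mul_cancel₀]
  exact (norm_pos_iff.mpr hy0).ne'

end Aux

/-- For an infinite-dimensional Banach space, β̄_X(t) ≤ δ̄_X(2t) for t ∈ (0,1/2]. -/
theorem betaMod_le_aucMod
    (X : Type*) [NormedAddCommGroup X] [NormedSpace ℝ X] [CompleteSpace X]
    (hinf : ¬ FiniteDimensional ℝ X)
    (t : ℝ) (ht0 : 0 < t) (ht1 : t ≤ 1 / 2) :
    betaMod X t ≤ aucMod X (2 * t) := by
  classical
  have h2t0 : 0 < 2 * t := by linarith
  have h2t1 : 2 * t ≤ 1 := by linarith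
  haveI : Nontrivial X := by
    by_contra h
    rw [not_nontrivial_iff_subsingleton] at h
    exact hinf (Module.Finite.of_surjective (0 : (Fin 1 → ℝ) →ₗ[ℝ] X)
      fun x => ⟨0, Subsingleton.elim _ _⟩)
  haveI : Nonempty {x : X // ‖x‖ = 1} := by
    obtain ⟨v, hv⟩ := exists_ne (0 : X)
    exact ⟨⟨‖v‖⁻¹ • v, by
      rw [norm_smul, norm_inv, norm_norm, inv_mul_cancel₀ (norm_ne_zero_iff.mpr hv)]⟩⟩
  -- the set in the definition of betaMod
  set Sset : Set ℝ := {r : ℝ | ∃ (x : X) (xs : ℕ → X), ‖x‖ ≤ 1 ∧ (∀ n, ‖xs n‖ ≤ 1) ∧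
    (∀ n m, n ≠ m → t ≤ ‖xs n - xs m‖) ∧ r = ⨅ n, ‖x + xs n‖ / 2} with hSset
  have hbddS : BddAbove Sset := by
    refine ⟨1, ?_⟩
    rintro r ⟨x, xs, hx, hxs, _, rfl⟩
    have hbb : BddBelow (Set.range fun n => ‖x + xs n‖ / 2) := by
      refine ⟨0, ?_⟩
      rintro r ⟨n, rfl⟩
      positivity
    refine ciInf_le_of_le hbb 0 ?_
    have := norm_add_le x (xs 0)
    have := hxs 0
    calc ‖x + xs 0‖ / 2 ≤ (‖x‖ + ‖xs 0‖) / 2 := by linarith [norm_add_le x (xs 0)]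
      _ ≤ 1 := by linarith
  -- nonnegativity of sSup Sset via Riesz
  have hS0 : 0 ≤ sSup Sset := by
    have hc : (1:ℝ) < ‖(3/2 : ℝ)‖ := by
      rw [Real.norm_eq_abs, abs_of_nonneg (by norm_num : (0:ℝ) ≤ 3/2)]; norm_num
    have hR : ‖(3/2 : ℝ)‖ < (2:ℝ) := by
      rw [Real.norm_eq_abs, abs_of_nonneg (by norm_num : (0:ℝ) ≤ 3/2)]; norm_num
    obtain ⟨f, hfR, hfsep⟩ := exists_seq_norm_le_one_le_norm_sub' hc hR hinf
    set xs : ℕ → X := fun n => (2:ℝ)⁻¹ • f n with hxs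
    have hmem : (⨅ n, ‖(0:X) + xs n‖ / 2) ∈ Sset := by
      refine ⟨0, xs, by simp, ?_, ?_, rfl⟩
      · intro n
        rw [hxs]
        simp only [norm_smul, norm_inv, Real.norm_ofNat]
        have := hfR n
        linarith [hfR n]
      · intro n m hnm
        have h1 : (1:ℝ) ≤ ‖f n - f m‖ := hfsep hnm
        have : xs n - xs m = (2:ℝ)⁻¹ • (f n - f m) := by rw [hxs]; rw [smul_sub]
        rw [this, norm_smul, norm_inv, Real.norm_ofNat]
        have ht : t ≤ 1/2 := ht1
        calc t ≤ 1/2 := ht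
          _ ≤ 2⁻¹ * ‖f n - f m‖ := by linarith
    refine le_trans ?_ (le_csSup hbddS hmem)
    apply Real.iInf_nonneg
    intro n
    positivity
  -- nonnegativity of aucMod and bddAbove of the sup family
  have hbddBelowInner : ∀ (x : X) (Y : Submodule ℝ X),
      BddBelow (Set.range fun z : {z : X // z ∈ Y ∧ 2 * t ≤ ‖z‖} => ‖x + z.val‖ - 1) := by
    intro x Y
    refine ⟨-1, ?_⟩
    rintro r ⟨z, rfl⟩
    have := norm_nonneg (x + z.val)
    simp only
    linarith
  have hbddAboveSup : ∀ x : {x : X // ‖x‖ = 1},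
      BddAbove (Set.range fun Y : {Y : Submodule ℝ X //
          IsClosed (Y : Set X) ∧ FiniteDimensional ℝ (X ⧸ Y)} =>
        ⨅ z : {z : X // z ∈ Y.val ∧ 2 * t ≤ ‖z‖}, (‖x.val + z.val‖ - 1)) := by
    intro x
    refine ⟨2 * t, ?_⟩
    rintro r ⟨Y, rfl⟩
    obtain ⟨z, hzY, hz⟩ := exists_norm_eq_of_isGood hinf ⟨Y.2.1, Y.2.2⟩ (2 * t) h2t0
    refine ciInf_le_of_le (hbddBelowInner _ _) ⟨z, hzY, hz.ge⟩ ?_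
    have h1 := norm_add_le x.val z
    rw [x.2, hz] at h1
    simp only
    linarith
  have hA0 : 0 ≤ aucMod X (2 * t) := by
    rw [aucMod]
    apply le_ciInf
    rintro ⟨x, hx⟩
    have hx0 : x ≠ 0 := by
      intro h; rw [h, norm_zero] at hx; norm_num at hx
    obtain ⟨f, hf1, hfx0⟩ := exists_dual_vector ℝ x (norm_ne_zero_iff.mpr hx0)
    have hfx : f x = ‖x‖ := hfx0
    have hgood := isGood_ker f
    have hpos : 0 ≤ ⨅ z : {z : X // z ∈ LinearMap.ker (f : X →ₗ[ℝ] ℝ) ∧ 2 * t ≤ ‖z‖},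
        (‖x + z.val‖ - 1) := by
      apply Real.iInf_nonneg
      rintro ⟨z, hzker, _⟩
      have h1 : f (x + z) = ‖x‖ := by
        rw [map_add, show f z = 0 from LinearMap.mem_ker.mp hzker, add_zero, hfx]
      have h2 : f (x + z) ≤ ‖x + z‖ := by
        calc f (x + z) ≤ |f (x + z)| := le_abs_self _
          _ = ‖f (x + z)‖ := (Real.norm_eq_abs _).symm
          _ ≤ ‖f‖ * ‖x + z‖ := f.le_opNorm _
          _ = ‖x + z‖ := by rw [hf1, one_mul]
      rw [hx] at h1
      simp only
      linarith
    exact le_trans hpos (le_ciSup (hbddAboveSup ⟨x, hx⟩)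
      ⟨LinearMap.ker (f : X →ₗ[ℝ] ℝ), hgood.1, hgood.2⟩)
  -- main estimate
  have main : ∀ ε > (0:ℝ), 1 - aucMod X (2 * t) ≤ sSup Sset + ε := by
    intro ε hε
    rcases le_or_gt (1 - aucMod X (2 * t) - ε) 0 with h1 | h1
    · linarith
    set A := aucMod X (2 * t) with hA
    have hAε : A + ε < 1 := by linarith
    set D : ℝ := A + ε / 2 with hD
    have hD0 : 0 < D := by rw [hD]; linarith
    have hD1 : D < 1 := by rw [hD]; linarith
    have h1D : (0:ℝ) < 1 + D := by linarith
    -- choose near-minimizing unit vector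
    have hAlt : (⨅ x : {x : X // ‖x‖ = 1},
        ⨆ Y : {Y : Submodule ℝ X // IsClosed (Y : Set X) ∧ FiniteDimensional ℝ (X ⧸ Y)},
          ⨅ z : {z : X // z ∈ Y.val ∧ 2 * t ≤ ‖z‖}, (‖x.val + z.val‖ - 1)) < D := by
      rw [show (⨅ x : {x : X // ‖x‖ = 1},
        ⨆ Y : {Y : Submodule ℝ X // IsClosed (Y : Set X) ∧ FiniteDimensional ℝ (X ⧸ Y)},
          ⨅ z : {z : X // z ∈ Y.val ∧ 2 * t ≤ ‖z‖}, (‖x.val + z.val‖ - 1)) = A from rfl]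
      rw [hD]; linarith
    obtain ⟨x₀u, hx₀lt⟩ := exists_lt_of_ciInf_lt hAlt
    have hx₀0 : x₀u.val ≠ 0 := by
      intro h
      have := x₀u.2
      rw [h, norm_zero] at this
      norm_num at this
    obtain ⟨f₀, hf₀1, hf₀x0⟩ := exists_dual_vector ℝ x₀u.val (norm_ne_zero_iff.mpr hx₀0)
    have hf₀x : f₀ x₀u.val = ‖x₀u.val‖ := hf₀x0
    -- from hx₀lt : the sup over Y is < D; extract z in any good Y
    have H : ∀ Y : Submodule ℝ X, IsGood Y →
        ∃ w, (w ∈ Y ∧ 2 * t ≤ ‖w‖) ∧ ‖x₀u.val + w‖ - 1 < D := by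
      intro Y hY
      have h2 : (⨅ z : {z : X // z ∈ Y ∧ 2 * t ≤ ‖z‖}, (‖x₀u.val + z.val‖ - 1)) < D :=
        lt_of_le_of_lt (le_ciSup (hbddAboveSup x₀u) ⟨Y, hY.1, hY.2⟩) hx₀lt
      haveI : Nonempty {z : X // z ∈ Y ∧ 2 * t ≤ ‖z‖} := by
        obtain ⟨z, hzY, hz⟩ := exists_norm_eq_of_isGood hinf hY (2 * t) h2t0
        exact ⟨⟨z, hzY, hz.ge⟩⟩
      obtain ⟨⟨w, hw⟩, hwlt⟩ := exists_lt_of_ciInf_lt h2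
      exact ⟨w, hw, hwlt⟩
    -- norming functionals chooser
    have Fex : ∀ y : X, y ≠ 0 → ∃ g : X →L[ℝ] ℝ, ‖g‖ = 1 ∧ g y = ‖y‖ :=
      fun y hy => exists_dual_vector ℝ y (norm_ne_zero_iff.mpr hy)
    set F : X → (X →L[ℝ] ℝ) := fun y =>
      if h : y = 0 then 0 else (Fex y h).choose with hF
    -- build the separated sequence by finite-set recursion
    have hstep : ∀ s : Finset X,
        (∀ w ∈ s, w ∈ LinearMap.ker (f₀ : X →ₗ[ℝ] ℝ) ∧ 2 * t ≤ ‖w‖ ∧ ‖x₀u.val + w‖ - 1 < D) →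
        ∃ y, (y ∈ LinearMap.ker (f₀ : X →ₗ[ℝ] ℝ) ∧ 2 * t ≤ ‖y‖ ∧ ‖x₀u.val + y‖ - 1 < D) ∧
          ∀ w ∈ s, 2 * t ≤ ‖w - y‖ := by
      intro s hs
      set Y : Submodule ℝ X :=
        LinearMap.ker (f₀ : X →ₗ[ℝ] ℝ) ⊓ s.inf (fun y => LinearMap.ker (F y : X →ₗ[ℝ] ℝ)) with hY
      have hgood : IsGood Y :=
        isGood_inf (isGood_ker f₀) (isGood_finsetInf s _ fun i _ => isGood_ker (F i))
      obtain ⟨w, ⟨hwY, hw2t⟩, hwlt⟩ := H Y hgood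
      refine ⟨w, ⟨(Submodule.mem_inf.mp hwY).1, hw2t, hwlt⟩, ?_⟩
      intro a ha
      have ha2t := (hs a ha).2.1
      have ha0 : a ≠ 0 := by
        intro h; rw [h, norm_zero] at ha2t; linarith
      have hFa := (Fex a ha0).choose_spec
      have hFaeq : F a = (Fex a ha0).choose := by rw [hF]; simp [ha0]
      have hker : w ∈ LinearMap.ker (F a : X →ₗ[ℝ] ℝ) := by
        have hle : Y ≤ LinearMap.ker (F a : X →ₗ[ℝ] ℝ) :=
          le_trans inf_le_right (Finset.inf_le ha)
        exact hle hwY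
      have hFaw : F a w = 0 := LinearMap.mem_ker.mp hker
      calc 2 * t ≤ ‖a‖ := ha2t
        _ = F a a := by rw [hFaeq, hFa.2]
        _ = F a (a - w) := by rw [map_sub, hFaw, sub_zero]
        _ ≤ |F a (a - w)| := le_abs_self _
        _ = ‖F a (a - w)‖ := (Real.norm_eq_abs _).symm
        _ ≤ ‖F a‖ * ‖a - w‖ := (F a).le_opNorm _
        _ = ‖a - w‖ := by rw [hFaeq, hFa.1, one_mul]
    obtain ⟨z, hzP, hzsep⟩ := exists_seq_of_forall_finset_exists
      (fun w : X => w ∈ LinearMap.ker (f₀ : X →ₗ[ℝ] ℝ) ∧ 2 * t ≤ ‖w‖ ∧ ‖x₀u.val + w‖ - 1 < D)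
      (fun a b => 2 * t ≤ ‖a - b‖) hstep
    -- the candidate sequence
    set xs : ℕ → X := fun n => (1 + D)⁻¹ • (x₀u.val + z n) with hxs
    have hzsep' : ∀ n m, n ≠ m → 2 * t ≤ ‖z n - z m‖ := by
      intro n m hnm
      rcases lt_or_gt_of_ne hnm with h | h
      · exact hzsep n m h
      · rw [norm_sub_rev]; exact hzsep m n h
    have hnorm_le : ∀ n, ‖x₀u.val + z n‖ ≤ 1 + D := by
      intro n
      have := (hzP n).2.2
      linarith
    have hmem : (⨅ n, ‖x₀u.val + xs n‖ / 2) ∈ Sset := by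
      refine ⟨x₀u.val, xs, x₀u.2.le, ?_, ?_, rfl⟩
      · intro n
        rw [hxs]
        simp only [norm_smul, Real.norm_eq_abs, abs_of_pos (inv_pos.mpr h1D)]
        rw [inv_mul_le_iff₀ h1D]
        have := hnorm_le n
        linarith
      · intro n m hnm
        have hsub : xs n - xs m = (1 + D)⁻¹ • (z n - z m) := by
          rw [hxs]
          simp only
          rw [← smul_sub]
          congr 1
          abel
        rw [hsub, norm_smul, Real.norm_eq_abs, abs_of_pos (inv_pos.mpr h1D)]
        have h2 := hzsep' n m hnm
        have key : (1 + D) * t ≤ 2 * t := by nlinarith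
        calc t = (1 + D)⁻¹ * ((1 + D) * t) := by field_simp
          _ ≤ (1 + D)⁻¹ * (2 * t) := by
            apply mul_le_mul_of_nonneg_left key (le_of_lt (inv_pos.mpr h1D))
          _ ≤ (1 + D)⁻¹ * ‖z n - z m‖ := by
            apply mul_le_mul_of_nonneg_left h2 (le_of_lt (inv_pos.mpr h1D))
    -- lower bound on each term
    have hinv : 1 - D ≤ (1 + D)⁻¹ := by
      rw [← one_div, le_div_iff₀ h1D]
      nlinarith
    have hterm : ∀ n, 1 - A - ε ≤ ‖x₀u.val + xs n‖ / 2 := by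
      intro n
      have hf₀z : f₀ (z n) = 0 := LinearMap.mem_ker.mp (hzP n).1
      have hval : f₀ (x₀u.val + xs n) = 1 + (1 + D)⁻¹ := by
        rw [hxs]
        simp only [map_add, map_smul, smul_eq_mul]
        rw [hf₀z, hf₀x, x₀u.2]
        ring
      have hle : 1 + (1 + D)⁻¹ ≤ ‖x₀u.val + xs n‖ := by
        rw [← hval]
        calc f₀ (x₀u.val + xs n) ≤ |f₀ (x₀u.val + xs n)| := le_abs_self _
          _ = ‖f₀ (x₀u.val + xs n)‖ := (Real.norm_eq_abs _).symm
          _ ≤ ‖f₀‖ * ‖x₀u.val + xs n‖ := f₀.le_opNorm _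
          _ = ‖x₀u.val + xs n‖ := by rw [hf₀1, one_mul]
      have : 1 - A - ε ≤ (1 + (1 + D)⁻¹) / 2 := by
        rw [hD] at hinv ⊢
        linarith
      linarith
    have hr : 1 - A - ε ≤ ⨅ n, ‖x₀u.val + xs n‖ / 2 := le_ciInf hterm
    have := le_csSup hbddS hmem
    linarith
  have hfin : 1 - aucMod X (2 * t) ≤ sSup Sset := le_of_forall_pos_le_add main
  rw [betaMod, ← hSset]
  linarith
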